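/- The symmetric group on an infinite set is not linear: Sym(ℕ) does not embed into GL(n, F) for any n and any field F. -/

import Mathlib

open Module Polynomial

lemma rank_bound {K : Type*} [Field K] [IsAlgClosed K] {p n m : ℕ} (hp : p.Prime)
    (hpK : (p : K) ≠ 0)
    (ρ : Multiplicative (Fin m → ZMod p) →* ((Fin n → K) →ₗ[K] (Fin n → K)))
    (hρ : Function.Injective ρ) : m ≤ n := by
  classical
  haveI : NeZero p := ⟨hp.pos.ne'⟩
  set V := Multiplicative (Fin m → ZMod p)
  -- every element has ρ v ^ p = 1
  have hpow : ∀ v : V, ρ v ^ p = 1 := by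
    intro v
    rw [← map_pow, ← map_one ρ]
    congr 1
    have h0 : p • Multiplicative.toAdd v = 0 := by
      funext i
      show p • (Multiplicative.toAdd v i) = 0
      rw [nsmul_eq_mul]
      simp [ZMod.natCast_self]
    have h1 : v ^ p = Multiplicative.ofAdd (p • Multiplicative.toAdd v) := by
      rw [ofAdd_nsmul]
      simp
    rw [h1, h0]
    simp
  have hcomm : ∀ v w : V, Commute (ρ v) (ρ w) := by
    intro v w
    unfold Commute SemiconjBy
    rw [← map_mul, ← map_mul, mul_comm]
  have sqf : Squarefree (X ^ p - 1 : K[X]) := by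
    have := (Polynomial.separable_X_pow_sub_C_unit (R := K) (n := p) 1
      (isUnit_iff_ne_zero.mpr hpK)).squarefree
    simpa using this
  have hss : ∀ v : V, Module.End.IsSemisimple (ρ v) := by
    intro v
    refine Module.End.isSemisimple_of_squarefree_aeval_eq_zero sqf ?_
    simp [map_sub, map_pow, hpow v]
  have htop := Module.End.iSup_iInf_maxGenEigenspace_eq_top_of_iSup_maxGenEigenspace_eq_top_of_commute
    (fun v : V => ρ v) (fun v w _ => hcomm v w)
    (fun v => Module.End.iSup_maxGenEigenspace_eq_top _)
  have hind := Module.End.independent_iInf_maxGenEigenspace_of_forall_mapsTo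
    (fun v : V => ρ v)
    (fun i j φ => Module.End.mapsTo_maxGenEigenspace_of_comm (hcomm j i) φ)
  haveI : Fintype {χ : V → K // (⨅ v : V, Module.End.maxGenEigenspace (ρ v) (χ v)) ≠ ⊥} :=
    hind.fintypeNeBotOfFiniteDimensional
  set S := {χ : V → K // (⨅ v : V, Module.End.maxGenEigenspace (ρ v) (χ v)) ≠ ⊥} with hS
  have hcardS : Fintype.card S ≤ n := by
    have := hind.subtype_ne_bot_le_finrank
    simpa using this
  -- eigenvalue action
  have heig : ∀ (χ : V → K) (v : V) (x : Fin n → K),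
      x ∈ (⨅ w : V, Module.End.maxGenEigenspace (ρ w) (χ w)) → ρ v x = χ v • x := by
    intro χ v x hx
    have hx' : x ∈ Module.End.maxGenEigenspace (ρ v) (χ v) := by
      exact (Submodule.mem_iInf _).mp hx v
    rw [(hss v).isFinitelySemisimple.maxGenEigenspace_eq_eigenspace] at hx'
    exact Module.End.mem_eigenspace_iff.mp hx'
  -- eigenvalues are p-th roots of unity
  have hroot : ∀ (χ : V → K), (⨅ w : V, Module.End.maxGenEigenspace (ρ w) (χ w)) ≠ ⊥ →
      ∀ v : V, (χ v) ^ p = 1 := by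
    intro χ hne v
    obtain ⟨x, hx, hx0⟩ := Submodule.exists_mem_ne_zero_of_ne_bot hne
    have key : ∀ k : ℕ, (ρ v ^ k) x = (χ v) ^ k • x := by
      intro k
      induction k with
      | zero => simp
      | succ k ih =>
        rw [pow_succ, Module.End.mul_apply, heig χ v x hx, map_smul, ih, smul_smul,
          pow_succ]
        ring_nf
    have h1 : ((χ v) ^ p) • x = x := by
      have := key p
      rw [hpow v] at this
      simpa using this.symm
    have h2 : ((χ v) ^ p - 1) • x = 0 := by
      rw [sub_smul, one_smul, h1, sub_self]
    rcases smul_eq_zero.mp h2 with h | h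
    · exact sub_eq_zero.mp h
    · exact absurd h hx0
  -- the injection into p-th roots of unity indexed by S
  have hP : 0 < p := hp.pos
  let g : V → (S → (Polynomial.nthRootsFinset p (1 : K) : Finset K)) := fun v χ =>
    ⟨χ.1 v, (Polynomial.mem_nthRootsFinset hP (1 : K)).mpr (hroot χ.1 χ.2 v)⟩
  have hg : Function.Injective g := by
    intro v w hvw
    apply hρ
    have hker : ∀ (χ : V → K) (x : Fin n → K),
        x ∈ (⨅ u : V, Module.End.maxGenEigenspace (ρ u) (χ u)) → ρ v x = ρ w x := by
      intro χ x hx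
      by_cases hb : (⨅ u : V, Module.End.maxGenEigenspace (ρ u) (χ u)) = ⊥
      · rw [hb] at hx
        simp only [Submodule.mem_bot] at hx
        simp [hx]
      · have hchi : χ v = χ w := by
          have := congrFun hvw ⟨χ, hb⟩
          exact Subtype.ext_iff.mp this
        rw [heig χ v x hx, heig χ w x hx, hchi]
    have hsub : ρ v - ρ w = 0 := by
      rw [← LinearMap.ker_eq_top, eq_top_iff, ← htop]
      refine iSup_le fun χ => ?_
      intro x hx
      rw [LinearMap.mem_ker, LinearMap.sub_apply, sub_eq_zero]
      exact hker χ x hx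
    exact sub_eq_zero.mp hsub
  -- counting
  have hcard1 : Fintype.card V = p ^ m := by
    rw [show Fintype.card V = Fintype.card (Fin m → ZMod p) from Fintype.card_congr
      Multiplicative.toAdd]
    simp [ZMod.card]
  have hroots_card : (Polynomial.nthRootsFinset p (1 : K)).card ≤ p := by
    refine le_trans (Multiset.toFinset_card_le _) ?_
    simpa using Polynomial.card_nthRoots p (1 : K)
  have hcard2 : Fintype.card V ≤ p ^ n := by
    calc Fintype.card V ≤ Fintype.card (S → (Polynomial.nthRootsFinset p (1 : K) : Finset K)) :=
          Fintype.card_le_of_injective g hg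
      _ = (Polynomial.nthRootsFinset p (1 : K)).card ^ Fintype.card S := by
          simp [Fintype.card_fun, Fintype.card_coe]
      _ ≤ p ^ Fintype.card S := Nat.pow_le_pow_left hroots_card _
      _ ≤ p ^ n := Nat.pow_le_pow_right hp.pos hcardS
  rw [hcard1] at hcard2
  exact (Nat.pow_le_pow_iff_right hp.one_lt).mp hcard2

/-- The symmetric group on an infinite set is not linear: `Sym(ℕ)` does not embed into
`GL(n, F)` for any `n` and any field `F`. -/
theorem symmetric_group_nat_not_linear
    (n : ℕ) (F : Type*) [Field F] (f : Equiv.Perm ℕ →* GL (Fin n) F) :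
    ¬ Function.Injective f := by
  classical
  intro hinj
  -- choose a prime p different from the characteristic
  obtain ⟨p, hple, hp⟩ := Nat.exists_infinite_primes (ringChar F + 2)
  haveI : NeZero p := ⟨hp.pos.ne'⟩
  set K := AlgebraicClosure F
  haveI : CharP K (ringChar F) :=
    charP_of_injective_algebraMap (algebraMap F K).injective (ringChar F)
  have hpK : (p : K) ≠ 0 := by
    intro h0
    have hdvd : ringChar F ∣ p := (CharP.cast_eq_zero_iff K (ringChar F) p).mp h0
    rcases (Nat.Prime.eq_one_or_self_of_dvd hp _ hdvd) with h1 | h1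
    · exact absurd h1 (CharP.char_ne_one F (ringChar F))
    · omega
  -- the translation action of (Fin (n+1) → ZMod p) on Fin (n+1) × ZMod p
  let τ : Multiplicative (Fin (n + 1) → ZMod p) →* Equiv.Perm (Fin (n + 1) × ZMod p) :=
    MonoidHom.mk' (fun v =>
      { toFun := fun x => (x.1, x.2 + Multiplicative.toAdd v x.1)
        invFun := fun x => (x.1, x.2 - Multiplicative.toAdd v x.1)
        left_inv := fun x => by simp
        right_inv := fun x => by simp })
      (by
        intro a b
        ext x
        · rfl
        · show x.2 + (Multiplicative.toAdd a x.1 + Multiplicative.toAdd b x.1)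
            = (x.2 + Multiplicative.toAdd b x.1) + Multiplicative.toAdd a x.1
          ring)
  have hτ : Function.Injective τ := by
    intro a b hab
    have key : ∀ i, Multiplicative.toAdd a i = Multiplicative.toAdd b i := by
      intro i
      have := congrArg (fun (σ : Equiv.Perm (Fin (n + 1) × ZMod p)) => (σ (i, 0)).2) hab
      simpa [τ] using this
    have : Multiplicative.toAdd a = Multiplicative.toAdd b := funext key
    simpa using congrArg Multiplicative.ofAdd this
  -- embed into Perm ℕ
  haveI := Fintype.toEncodable (Fin (n + 1) × ZMod p)
  let e : Fin (n + 1) × ZMod p ↪ ℕ := Encodable.encode' _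
  let ι : Equiv.Perm (Fin (n + 1) × ZMod p) →* Equiv.Perm ℕ := Equiv.Perm.viaEmbeddingHom e
  have hι : Function.Injective ι := Equiv.Perm.viaEmbeddingHom_injective e
  -- extend scalars to the algebraic closure and pass to endomorphisms
  let φ : GL (Fin n) F →* GL (Fin n) K :=
    Units.map ((algebraMap F K).mapMatrix : Matrix (Fin n) (Fin n) F →+* _).toMonoidHom
  have hφ : Function.Injective φ := by
    intro A B hAB
    ext i j
    have := congrArg (fun (U : GL (Fin n) K) => (U : Matrix (Fin n) (Fin n) K) i j) hAB
    exact (algebraMap F K).injective this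
  let ψ : GL (Fin n) K →* ((Fin n → K) →ₗ[K] (Fin n → K)) :=
    (Matrix.toLinAlgEquiv' : Matrix (Fin n) (Fin n) K ≃ₐ[K] _).toMonoidHom.comp
      (Units.coeHom _)
  have hψ : Function.Injective ψ := by
    intro A B hAB
    exact Units.ext ((Matrix.toLinAlgEquiv' (R := K)).injective hAB)
  let ρ : Multiplicative (Fin (n + 1) → ZMod p) →* ((Fin n → K) →ₗ[K] (Fin n → K)) :=
    (ψ.comp (φ.comp (f.comp ι))).comp τ
  have hρ : Function.Injective ρ := by
    intro a b hab
    exact hτ (hι (hinj (hφ (hψ hab))))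
  have := rank_bound hp hpK ρ hρ
  omega
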